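/- Let A be a finite-dimensional algebra over F with anisotropic multiplicative norm N, c ∈ A nonzero, and f, g similarities of N with factors α, β. Define x∘y = xy − c(f(y)g(x)) (with the arguments swapped in the twisted term). If N(c) ≠ 1/(αβ), then (A,∘) is a division algebra. -/
import Mathlib


/-- Albert-type twist with swapped arguments `x∘y = xy − c(f(y)g(x))`:
if `N(c) ≠ 1/(αβ)` then `(A,∘)` is a division algebra (no zero divisors). -/
theorem stmt_2 (F : Type*) [Field F] (A : Type*) [AddCommGroup A] [Module F A]
    [FiniteDimensional F A]
    (mul : A →ₗ[F] A →ₗ[F] A) (N : A → F)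
    (hNmul : ∀ x y : A, N (mul x y) = N x * N y)
    (hNaniso : ∀ x : A, N x = 0 → x = 0)
    (c : A) (hc : c ≠ 0)
    (f g : A →ₗ[F] A) (α β : F) (hα : α ≠ 0) (hβ : β ≠ 0)
    (hf : ∀ x : A, N (f x) = α * N x) (hg : ∀ x : A, N (g x) = β * N x)
    (hNc : N c ≠ (α * β)⁻¹) :
    ∀ x y : A, mul x y - mul c (mul (f y) (g x)) = 0 → x = 0 ∨ y = 0 := by
  intro x y h
  by_contra hxy
  push_neg at hxy
  obtain ⟨hx, hy⟩ := hxy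
  have hNx : N x ≠ 0 := fun h0 => hx (hNaniso x h0)
  have hNy : N y ≠ 0 := fun h0 => hy (hNaniso y h0)
  have heq : mul x y = mul c (mul (f y) (g x)) := by
    have := sub_eq_zero.mp h; exact this
  have hN : N x * N y = N c * ((α * N y) * (β * N x)) := by
    have := congrArg N heq
    rwa [hNmul, hNmul, hNmul, hf, hg] at this
  apply hNc
  have h2 : (N x * N y) * (N c * (α * β)) = (N x * N y) * 1 := by
    linear_combination -hN
  have h3 := mul_left_cancel₀ (mul_ne_zero hNx hNy) h2
  exact eq_inv_of_mul_eq_one_left (by linear_combination h3)
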